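/- Let (z_n)_{n∈ℕ} be the sequence of coordinate functions on 𝕋^ℕ equipped with the product of normalized Haar measures μ. Let X = L¹(m'') be an L¹-space, and let (f¹_n)_{n∈ℕ} and (f²_n)_{n∈ℕ} be sequences in X which are c₁-dominated and c₂-dominated by (z_n), respectively. Define the interleaved sequence (f_n) by f_{2k} = f²_k and f_{2k+1} = f¹_k. Then (f_n) is (c₁ + c₂)-dominated by (z_n); i.e., there is a bounded linear map u : L¹(𝕋^ℕ, μ) → X with ‖u‖ ≤ c₁ + c₂ and u(z_n) = f_n for all n. -/

import Mathlib

open MeasureTheory ProbabilityTheory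

/-- The normalized Haar (arc-length) measure of the unit circle, as a measure on `ℂ`:
the image of Lebesgue measure on `[0, 1)` under `θ ↦ e^{2πiθ}`. -/
noncomputable def circleMeasure : Measure ℂ :=
  Measure.map (fun θ : ℝ => Complex.exp (2 * Real.pi * θ * Complex.I))
    (volume.restrict (Set.Ico (0 : ℝ) 1))

section Aux

lemma integral_circleMeasure_id : ∫ w, w ∂circleMeasure = (0 : ℂ) := by
  have hmeas : Measurable fun θ : ℝ => Complex.exp (2 * Real.pi * θ * Complex.I) := by
    fun_prop
  rw [circleMeasure, integral_map hmeas.aemeasurable (f := fun w => w) aestronglyMeasurable_id]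
  have h1 : ∫ θ in Set.Ico (0 : ℝ) 1, Complex.exp (2 * Real.pi * θ * Complex.I)
      = ∫ θ in Set.Ioc (0 : ℝ) 1, Complex.exp (2 * Real.pi * θ * Complex.I) :=
    setIntegral_congr_set Ico_ae_eq_Ioc
  rw [h1, ← intervalIntegral.integral_of_le (zero_le_one (α := ℝ))]
  have h2 : ∀ θ : ℝ, Complex.exp (2 * Real.pi * θ * Complex.I)
      = Complex.exp ((2 * (Real.pi : ℂ) * Complex.I) * θ) := by
    intro θ; push_cast; ring_nf
  rw [intervalIntegral.integral_congr (g := fun θ : ℝ =>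
    Complex.exp ((2 * (Real.pi : ℂ) * Complex.I) * θ)) (fun x _ => h2 x)]
  have hc : (2 * (Real.pi : ℂ) * Complex.I) ≠ 0 := by
    simp [Real.pi_ne_zero, Complex.I_ne_zero, Complex.ofReal_ne_zero]
  rw [integral_exp_mul_complex hc]
  simp [Complex.exp_two_pi_mul_I]

variable {Ω : Type} [mΩ : MeasurableSpace Ω] (μ : Measure Ω) [IsProbabilityMeasure μ]
  (z : ℕ → Ω → ℂ)

lemma box_measure (hzmeas : ∀ n, Measurable (z n))
    (hzindep : iIndepFun z μ)
    (hzdist : ∀ n, Measure.map (z n) μ = circleMeasure)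
    {j : ℕ → ℕ} (hj : Function.Injective j) (I : Finset ℕ) (t : ℕ → Set ℂ)
    (ht : ∀ i, MeasurableSet (t i)) :
    μ (⋂ k ∈ I, z (j k) ⁻¹' t k) = ∏ k ∈ I, circleMeasure (t k) := by
  classical
  have hsets : ∀ i ∈ I.image j,
      MeasurableSet (Function.extend j t (fun _ => Set.univ) i) := by
    intro i hi
    obtain ⟨k, _, rfl⟩ := Finset.mem_image.mp hi
    rw [hj.extend_apply]
    exact ht k
  have h := hzindep.measure_inter_preimage_eq_mul (I.image j)
      (sets := Function.extend j t (fun _ => Set.univ)) hsets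
  have hInter : (⋂ i ∈ I.image j, z i ⁻¹' (Function.extend j t (fun _ => Set.univ) i))
      = ⋂ k ∈ I, z (j k) ⁻¹' t k := by
    ext ω
    simp only [Set.mem_iInter, Finset.mem_image, Set.mem_preimage]
    constructor
    · intro h k hk
      have := h (j k) ⟨k, hk, rfl⟩
      rwa [hj.extend_apply] at this
    · rintro h i ⟨k, hk, rfl⟩
      rw [hj.extend_apply]
      exact h k hk
  have hProd : (∏ i ∈ I.image j, μ (z i ⁻¹' (Function.extend j t (fun _ => Set.univ) i)))
      = ∏ k ∈ I, circleMeasure (t k) := by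
    rw [Finset.prod_image (fun x _ y _ h => hj h)]
    refine Finset.prod_congr rfl fun k _ => ?_
    rw [hj.extend_apply, ← hzdist (j k), Measure.map_apply (hzmeas (j k)) (ht k)]
  rw [hInter, hProd] at h
  exact h

lemma map_box (hzmeas : ∀ n, Measurable (z n))
    (hzindep : iIndepFun z μ)
    (hzdist : ∀ n, Measure.map (z n) μ = circleMeasure)
    {j : ℕ → ℕ} (hj : Function.Injective j) (I : Finset ℕ) (t : ℕ → Set ℂ)
    (ht : ∀ i, MeasurableSet (t i)) :
    Measure.map (fun ω (k : ℕ) => z (j k) ω) μ ((I : Set ℕ).pi t)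
      = ∏ k ∈ I, circleMeasure (t k) := by
  have hSj : Measurable fun ω (k : ℕ) => z (j k) ω :=
    measurable_pi_lambda _ fun k => hzmeas (j k)
  have hps : MeasurableSet ((I : Set ℕ).pi t) :=
    MeasurableSet.pi I.countable_toSet fun i _ => ht i
  rw [Measure.map_apply hSj hps]
  have hpre : (fun ω (k : ℕ) => z (j k) ω) ⁻¹' ((I : Set ℕ).pi t)
      = ⋂ k ∈ I, z (j k) ⁻¹' t k := by
    ext ω
    simp [Set.mem_pi]
  rw [hpre]
  exact box_measure μ z hzmeas hzindep hzdist hj I t ht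

lemma map_seq_eq (hzmeas : ∀ n, Measurable (z n))
    (hzindep : iIndepFun z μ)
    (hzdist : ∀ n, Measure.map (z n) μ = circleMeasure)
    {j : ℕ → ℕ} (hj : Function.Injective j) :
    Measure.map (fun ω (k : ℕ) => z (j k) ω) μ
      = Measure.map (fun ω (k : ℕ) => z k ω) μ := by
  have hSj : Measurable fun ω (k : ℕ) => z (j k) ω :=
    measurable_pi_lambda _ fun k => hzmeas (j k)
  have hS0 : Measurable fun ω (k : ℕ) => z k ω :=
    measurable_pi_lambda _ fun k => hzmeas k
  haveI : IsProbabilityMeasure (Measure.map (fun ω (k : ℕ) => z (j k) ω) μ) :=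
    Measure.isProbabilityMeasure_map hSj.aemeasurable
  haveI : IsProbabilityMeasure (Measure.map (fun ω (k : ℕ) => z k ω) μ) :=
    Measure.isProbabilityMeasure_map hS0.aemeasurable
  refine ext_of_generate_finite _ generateFrom_squareCylinders.symm
    (isPiSystem_squareCylinders (fun _ => MeasurableSpace.isPiSystem_measurableSet)
      (fun _ => Set.mem_setOf_eq ▸ MeasurableSet.univ)) ?_ (by simp)
  rintro s ⟨I, t, htmem, rfl⟩
  have ht : ∀ i, MeasurableSet (t i) := fun i => htmem i (Set.mem_univ i)
  exact (map_box μ z hzmeas hzindep hzdist hj I t ht).trans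
    (map_box μ z hzmeas hzindep hzdist (fun _ _ h => h) I t ht).symm

/-- The σ-algebra generated by the subsequence `z ∘ j`. -/
noncomputable abbrev mshift {Ω : Type} (z : ℕ → Ω → ℂ) (j : ℕ → ℕ) : MeasurableSpace Ω :=
  MeasurableSpace.comap (fun ω (k : ℕ) => z (j k) ω) MeasurableSpace.pi

end Aux

section SurjAux

variable {α γ : Type} [m : MeasurableSpace α] [mγ : MeasurableSpace γ]

/-- A composition operator along a measure-preserving map whose σ-algebra is the comap
σ-algebra is a surjective isometry, hence an isometric isomorphism of `L¹` spaces. -/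
lemma exists_comp_equiv (ρ : Measure α) (ν : Measure γ) [IsFiniteMeasure ν]
    (S : α → γ) (hpres : MeasurePreserving S ρ ν)
    (hcomap : ∀ s : Set α, MeasurableSet s → ∃ B : Set γ, MeasurableSet B ∧ S ⁻¹' B = s) :
    ∃ Ψ : Lp ℂ 1 ν ≃ₗᵢ[ℂ] Lp ℂ 1 ρ,
      ∀ g : Lp ℂ 1 ν, Ψ g = Lp.compMeasurePreserving S hpres g := by
  set Φ0 := Lp.compMeasurePreservingₗᵢ (E := ℂ) (p := 1) ℂ S hpres with hΦ0def
  have hsurj : Function.Surjective Φ0 := by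
    intro f
    refine Lp.induction (E := ℂ) (μ := ρ) ENNReal.one_ne_top
      (fun f => ∃ g, Φ0 g = f) ?_ ?_ ?_ f
    · intro c s hs hμs
      obtain ⟨B, hB, rfl⟩ := hcomap s hs
      exact ⟨indicatorConstLp 1 hB (measure_ne_top ν B) c,
        Lp.indicatorConstLp_compMeasurePreserving (p := 1) hB (measure_ne_top ν B) c hpres⟩
    · rintro f g hf hg hdisj ⟨gf, hgf⟩ ⟨gg, hgg⟩
      exact ⟨gf + gg, by rw [map_add, hgf, hgg]⟩
    · exact Φ0.isometry.isClosedEmbedding.isClosed_range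
  exact ⟨LinearIsometryEquiv.ofSurjective Φ0 hsurj,
    fun g => congrFun (LinearIsometryEquiv.coe_ofSurjective Φ0 hsurj) g⟩

end SurjAux

section Core

/-- Main construction: for an injective reindexing `j`, there is a norm-one operator sending
`z (j k)` to `z k` and killing `z n` for `n` outside the range of `j`. -/
lemma exists_shift {Ω : Type} {mΩ : MeasurableSpace Ω} (μ : @Measure Ω mΩ)
    [IsProbabilityMeasure μ] (z : ℕ → Ω → ℂ)
    (hzmeas : ∀ n, Measurable[mΩ] (z n))
    (hzindep : iIndepFun z μ)
    (hzdist : ∀ n, Measure.map (z n) μ = circleMeasure)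
    (hzmem : ∀ n, MemLp (z n) 1 μ)
    {j : ℕ → ℕ} (hj : Function.Injective j) :
    ∃ A : Lp ℂ 1 μ →L[ℂ] Lp ℂ 1 μ, ‖A‖ ≤ 1 ∧
      (∀ k, A ((hzmem (j k)).toLp (z (j k))) = (hzmem k).toLp (z k)) ∧
      (∀ n, n ∉ Set.range j → A ((hzmem n).toLp (z n)) = 0) := by
  classical
  set S0 : Ω → (ℕ → ℂ) := fun ω k => z k ω with hS0def
  set Sj : Ω → (ℕ → ℂ) := fun ω k => z (j k) ω with hSjdef
  have hS0 : Measurable[mΩ] S0 := measurable_pi_lambda _ fun k => hzmeas k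
  have hSj : Measurable[mΩ] Sj := measurable_pi_lambda _ fun k => hzmeas (j k)
  set ν : Measure (ℕ → ℂ) := Measure.map S0 μ with hνdef
  haveI : IsProbabilityMeasure ν := Measure.isProbabilityMeasure_map hS0.aemeasurable
  have hmapj : Measure.map Sj μ = ν := @map_seq_eq Ω mΩ μ _ z hzmeas hzindep hzdist j hj
  have hm : mshift z j ≤ mΩ := measurable_iff_comap_le.mp hSj
  haveI hσ : SigmaFinite (μ.trim hm) := (isFiniteMeasure_trim hm).toSigmaFinite
  have hSjm : Measurable[mshift z j] Sj := comap_measurable Sj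
  have hmapj_trim : @Measure.map Ω (ℕ → ℂ) (mshift z j) _ Sj (μ.trim hm) = ν := by
    ext s hs
    rw [Measure.map_apply hSjm hs, trim_measurableSet_eq hm (hSjm hs),
      ← Measure.map_apply hSj hs, hmapj]
  have hpresj : @MeasurePreserving Ω (ℕ → ℂ) (mshift z j) _ Sj (μ.trim hm) ν :=
    @MeasurePreserving.mk Ω (ℕ → ℂ) (mshift z j) _ Sj (μ.trim hm) ν hSjm hmapj_trim
  have hpres0 : MeasurePreserving S0 μ ν := ⟨hS0, rfl⟩
  have hcomap' : ∀ s : Set Ω, MeasurableSet[mshift z j] s →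
      ∃ B : Set (ℕ → ℂ), MeasurableSet B ∧ Sj ⁻¹' B = s := fun s hs => hs
  obtain ⟨Φ, hΦ⟩ := @exists_comp_equiv Ω (ℕ → ℂ) (mshift z j) _ (μ.trim hm) ν _
    Sj hpresj hcomap'
  set T := lpMeasToLpTrimLie ℂ ℂ 1 μ hm with hTdef
  set Cfull := Lp.compMeasurePreservingₗᵢ (E := ℂ) (p := 1) ℂ S0 hpres0 with hCdef
  -- the conditional expectation, as a ℂ-linear map into lpMeas
  set E := condExpL1CLM ℂ hm μ with hEdef
  have hEnorm : ∀ f : Lp ℂ 1 μ, ‖E f‖ ≤ ‖f‖ := by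
    intro f
    have := L1.norm_setToL1_le_mul_norm (dominatedFinMeasAdditive_condExpInd ℂ hm μ)
      zero_le_one f
    simpa [hEdef, condExpL1CLM] using this
  set E' : (Lp ℂ 1 μ) →L[ℂ] lpMeas ℂ ℂ (mshift z j) 1 μ :=
    { toFun := fun f => ⟨E f,
        mem_lpMeas_iff_aestronglyMeasurable.mpr (aestronglyMeasurable_condExpL1CLM f)⟩
      map_add' := fun f g => Subtype.ext (by simp)
      map_smul' := fun c f => Subtype.ext (by
        simpa using condExpL1CLM_smul (𝕜 := ℂ) c f)
      cont := Continuous.subtype_mk E.continuous _ } with hE'def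
  set A : Lp ℂ 1 μ →L[ℂ] Lp ℂ 1 μ :=
    (Cfull.toContinuousLinearMap.comp
      ((Φ.symm.toLinearIsometry.toContinuousLinearMap).comp
        ((T.toLinearIsometry.toContinuousLinearMap).comp E'))) with hAdef
  have hAapply : ∀ f, A f = Cfull (Φ.symm (T (E' f))) := fun f => rfl
  refine ⟨A, ?_, ?_, ?_⟩
  · refine ContinuousLinearMap.opNorm_le_bound _ zero_le_one fun f => ?_
    rw [one_mul, hAapply]
    rw [Cfull.norm_map, Φ.symm.norm_map, T.norm_map]
    calc ‖E' f‖ = ‖E f‖ := rfl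
    _ ≤ ‖f‖ := hEnorm f
  · -- A (z (j k)) = z k
    intro k
    have hmzm : Measurable[mshift z j] (z (j k)) := by
      have h1 : Measurable[mshift z j] fun ω => Sj ω k :=
        (measurable_pi_apply k).comp hSjm
      exact h1
    have hasm : AEStronglyMeasurable[mshift z j] (((hzmem (j k)).toLp (z (j k))) : Ω → ℂ) μ :=
      ⟨z (j k), hmzm.stronglyMeasurable, MemLp.coeFn_toLp _⟩
    have hE1 : E' ((hzmem (j k)).toLp (z (j k)))
        = ⟨(hzmem (j k)).toLp (z (j k)), mem_lpMeas_iff_aestronglyMeasurable.mpr hasm⟩ :=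
      Subtype.ext (condExpL1CLM_of_aestronglyMeasurable' _ hasm)
    set x : lpMeas ℂ ℂ (mshift z j) 1 μ :=
      ⟨(hzmem (j k)).toLp (z (j k)), mem_lpMeas_iff_aestronglyMeasurable.mpr hasm⟩ with hxdef
    have hwk : MemLp (fun x : ℕ → ℂ => x k) 1 ν := by
      rw [hνdef, memLp_map_measure_iff (measurable_pi_apply k).aestronglyMeasurable
        hS0.aemeasurable]
      exact hzmem k
    -- T x = Φ0 (toLp w_k)
    have hTx : T x = Φ (hwk.toLp _) := by
      have h1 : ⇑(T x) =ᵐ[μ] z (j k) := by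
        refine Filter.EventuallyEq.trans ?_ (MemLp.coeFn_toLp (hzmem (j k)))
        exact lpMeasToLpTrim_ae_eq hm x
      have hFm := Lp.aestronglyMeasurable (T x)
      have e1 : ⇑(T x) =ᵐ[μ.trim hm] hFm.mk _ := hFm.ae_eq_mk
      have e2 : hFm.mk _ =ᵐ[μ] z (j k) := (ae_eq_of_ae_eq_trim e1).symm.trans h1
      have e3 : hFm.mk _ =ᵐ[μ.trim hm] z (j k) :=
        StronglyMeasurable.ae_eq_trim_of_stronglyMeasurable hm hFm.stronglyMeasurable_mk
          hmzm.stronglyMeasurable e2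
      have h1' : ⇑(T x) =ᵐ[μ.trim hm] z (j k) := e1.trans e3
      have h2 : ⇑(Φ (hwk.toLp _)) =ᵐ[μ.trim hm] z (j k) := by
        rw [hΦ]
        refine (Lp.coeFn_compMeasurePreserving _ hpresj).trans ?_
        have hco : ⇑(hwk.toLp _) =ᵐ[ν] (fun x : ℕ → ℂ => x k) := hwk.coeFn_toLp
        have := MeasureTheory.ae_eq_comp (μ := μ.trim hm) hSjm.aemeasurable
          (g := ⇑(hwk.toLp _)) (g' := fun x : ℕ → ℂ => x k) (by rwa [hmapj_trim])
        exact this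
      exact Lp.ext (h1'.trans h2.symm)
    have hΦsymm : Φ.symm (Φ (hwk.toLp _)) = hwk.toLp _ :=
      LinearIsometryEquiv.symm_apply_apply _ _
    have hCf : Cfull (hwk.toLp _) = (hzmem k).toLp (z k) := by
      refine Lp.ext ?_
      refine (Lp.coeFn_compMeasurePreserving _ hpres0).trans ?_
      have hco : ⇑(hwk.toLp _) =ᵐ[ν] (fun x : ℕ → ℂ => x k) := hwk.coeFn_toLp
      have h3 : ⇑(hwk.toLp _) ∘ S0 =ᵐ[μ] (fun x : ℕ → ℂ => x k) ∘ S0 :=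
        MeasureTheory.ae_eq_comp (μ := μ) hS0.aemeasurable hco
      exact h3.trans ((hzmem k).coeFn_toLp).symm
    rw [hAapply, hE1, hTx, hΦsymm, hCf]
  · -- A (z n) = 0 for n outside the range of j
    intro n hn
    have hIndep : Indep (MeasurableSpace.comap (z n) inferInstance) (mshift z j) μ := by
      have h := indep_biSup_compl (fun i => (hzmeas i).comap_le) hzindep {n}
      have hleft : (⨆ i ∈ ({n} : Set ℕ), MeasurableSpace.comap (z i) inferInstance)
          = MeasurableSpace.comap (z n) inferInstance := by simp
      rw [hleft] at h
      refine indep_of_indep_of_le_right h ?_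
      have hcomap : mshift z j = ⨆ k, MeasurableSpace.comap (z (j k)) inferInstance := by
        show MeasurableSpace.comap Sj MeasurableSpace.pi = _
        have hpi : (MeasurableSpace.pi : MeasurableSpace (ℕ → ℂ))
            = ⨆ k, MeasurableSpace.comap (fun x : ℕ → ℂ => x k) inferInstance := rfl
        rw [hpi, MeasurableSpace.comap_iSup]
        refine iSup_congr fun k => ?_
        rw [MeasurableSpace.comap_comp]
        rfl
      rw [hcomap]
      refine iSup_le fun k => ?_
      have hne : j k ∈ ({n}ᶜ : Set ℕ) := by
        simp only [Set.mem_compl_iff, Set.mem_singleton_iff]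
        exact fun h => hn ⟨k, h⟩
      exact le_iSup_of_le (j k) (le_iSup_of_le hne le_rfl)
    have hint : Integrable (z n) μ := memLp_one_iff_integrable.mp (hzmem n)
    have hint0 : ∫ ω, z n ω ∂μ = 0 := by
      have h1 : ∫ w, w ∂circleMeasure = ∫ ω, z n ω ∂μ := by
        rw [← hzdist n, integral_map (hzmeas n).aemeasurable (f := fun w => w)
          aestronglyMeasurable_id]
      rw [← h1, integral_circleMeasure_id]
    have hcz : condExpL1 hm μ (z n) = 0 := by
      rw [Lp.eq_zero_iff_ae_eq_zero]
      have h1 : ⇑(condExpL1 hm μ (z n)) =ᵐ[μ] μ[z n|mshift z j] :=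
        (condExp_ae_eq_condExpL1 hm (z n)).symm
      have h2 : μ[z n|mshift z j] =ᵐ[μ] fun _ => ∫ ω, z n ω ∂μ :=
        condExp_indep_eq ((hzmeas n).comap_le) hm
          ((comap_measurable (z n)).stronglyMeasurable) hIndep
      refine h1.trans (h2.trans ?_)
      rw [hint0]
      rfl
    have htoLp : (hzmem n).toLp (z n) = hint.toL1 (z n) :=
      Lp.ext ((MemLp.coeFn_toLp _).trans (hint.coeFn_toL1).symm)
    have hE0 : E' ((hzmem n).toLp (z n)) = 0 := by
      refine Subtype.ext ?_
      show E ((hzmem n).toLp (z n)) = (0 : Lp ℂ 1 μ)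
      rw [hEdef, htoLp, ← condExpL1_eq hint, hcz]
    rw [hAapply, hE0, map_zero, map_zero, map_zero]

end Core


/-- Let `(z_n)` be an i.i.d. sequence of Steinhaus variables (the
coordinate functions on `𝕋^ℕ` with the product of normalized Haar measures), and let
`(f¹_n)`, `(f²_n)` be sequences in an `L¹`-space `X = L¹(m'')` that are respectively
`c₁`- and `c₂`-dominated by `(z_n)`. Then the interleaved sequence `f_{2k} = f²_k`,
`f_{2k+1} = f¹_k` is `(c₁ + c₂)`-dominated by `(z_n)`: there is a bounded linear map
`u : L¹(μ) → X` with `‖u‖ ≤ c₁ + c₂` and `u(z_n) = f_n` for all `n`. -/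
theorem interleaving_dominated {Ω : Type} [mΩ : MeasurableSpace Ω] (μ : Measure Ω)
    [IsProbabilityMeasure μ]
    (z : ℕ → Ω → ℂ) (hzmeas : ∀ n, Measurable (z n))
    (hzindep : iIndepFun z μ)
    (hzdist : ∀ n, Measure.map (z n) μ = circleMeasure)
    (hzmem : ∀ n, MemLp (z n) 1 μ)
    {X : Type} [mX : MeasurableSpace X] (m'' : Measure X)
    (f1 f2 : ℕ → X → ℂ)
    (hf1mem : ∀ n, MemLp (f1 n) 1 m'') (hf2mem : ∀ n, MemLp (f2 n) 1 m'')
    (c1 c2 : ℝ)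
    (u1 : Lp ℂ 1 μ →L[ℂ] Lp ℂ 1 m'') (hu1 : ‖u1‖ ≤ c1)
    (hu1z : ∀ n, u1 ((hzmem n).toLp (z n)) = (hf1mem n).toLp (f1 n))
    (u2 : Lp ℂ 1 μ →L[ℂ] Lp ℂ 1 m'') (hu2 : ‖u2‖ ≤ c2)
    (hu2z : ∀ n, u2 ((hzmem n).toLp (z n)) = (hf2mem n).toLp (f2 n)) :
    ∃ u : Lp ℂ 1 μ →L[ℂ] Lp ℂ 1 m'',
      ‖u‖ ≤ c1 + c2 ∧
      (∀ k, u ((hzmem (2 * k)).toLp (z (2 * k))) = (hf2mem k).toLp (f2 k)) ∧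
      (∀ k, u ((hzmem (2 * k + 1)).toLp (z (2 * k + 1))) = (hf1mem k).toLp (f1 k)) := by
  have hj1 : Function.Injective (fun k : ℕ => 2 * k + 1) := fun a b h => by
    have h' : 2 * a + 1 = 2 * b + 1 := h
    omega
  have hj2 : Function.Injective (fun k : ℕ => 2 * k) := fun a b h => by
    have h' : 2 * a = 2 * b := h
    omega
  obtain ⟨A1, hA1norm, hA1j, hA1z⟩ :=
    exists_shift μ z hzmeas hzindep hzdist hzmem hj1
  obtain ⟨A2, hA2norm, hA2j, hA2z⟩ :=
    exists_shift μ z hzmeas hzindep hzdist hzmem hj2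
  refine ⟨u1.comp A1 + u2.comp A2, ?_, ?_, ?_⟩
  · have h1 : ‖u1.comp A1‖ ≤ c1 := by
      refine le_trans (ContinuousLinearMap.opNorm_comp_le _ _) ?_
      calc ‖u1‖ * ‖A1‖ ≤ ‖u1‖ * 1 :=
            mul_le_mul_of_nonneg_left hA1norm (norm_nonneg _)
      _ = ‖u1‖ := mul_one _
      _ ≤ c1 := hu1
    have h2 : ‖u2.comp A2‖ ≤ c2 := by
      refine le_trans (ContinuousLinearMap.opNorm_comp_le _ _) ?_
      calc ‖u2‖ * ‖A2‖ ≤ ‖u2‖ * 1 :=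
            mul_le_mul_of_nonneg_left hA2norm (norm_nonneg _)
      _ = ‖u2‖ := mul_one _
      _ ≤ c2 := hu2
    exact le_trans (norm_add_le _ _) (add_le_add h1 h2)
  · intro k
    have hodd : (2 * k : ℕ) ∉ Set.range (fun k : ℕ => 2 * k + 1) := by
      rintro ⟨k', hk'⟩
      have h' := hk'
      simp only [] at h'
      omega
    have e1 : A1 ((hzmem (2 * k)).toLp (z (2 * k))) = 0 := hA1z (2 * k) hodd
    have e2 : A2 ((hzmem (2 * k)).toLp (z (2 * k))) = (hzmem k).toLp (z k) := hA2j k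
    simp only [ContinuousLinearMap.add_apply, ContinuousLinearMap.comp_apply, e1, e2,
      map_zero, zero_add]
    exact hu2z k
  · intro k
    have heven : (2 * k + 1 : ℕ) ∉ Set.range (fun k : ℕ => 2 * k) := by
      rintro ⟨k', hk'⟩
      have h' := hk'
      simp only [] at h'
      omega
    have e1 : A1 ((hzmem (2 * k + 1)).toLp (z (2 * k + 1))) = (hzmem k).toLp (z k) := hA1j k
    have e2 : A2 ((hzmem (2 * k + 1)).toLp (z (2 * k + 1))) = 0 := hA2z (2 * k + 1) heven
    simp only [ContinuousLinearMap.add_apply, ContinuousLinearMap.comp_apply, e1, e2,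
      map_zero, add_zero]
    exact hu1z k
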